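/- For every constant c < 1/2 the following holds: if G is a uniformly random tournament on n vertices (the direction of each edge is decided independently by a fair coin flip), then the probability that G has an acyclic subgraph with underlying chromatic number at least c·n/log₂ n tends to 1 as n tends to infinity. -/

import Mathlib

open Finset Filter

/-- A directed-edge relation is acyclic if there is no directed cycle. -/
def IsAcyclicRel {V : Type*} (E : V → V → Prop) : Prop :=
  ∀ v, ¬ Relation.TransGen E v v

/-- The sample space for the random tournament on `n` vertices: one independent fair
coin flip for each pair `i < j`. -/
abbrev CoinFlips (n : ℕ) : Type := {p : Fin n × Fin n // p.1 < p.2} → Bool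

/-- The tournament on `Fin n` determined by the coin flips `ω`: for `i < j`, the edge
between `i` and `j` points from `i` to `j` iff the coin for the pair `(i, j)` came up
`true`. -/
def tournOf {n : ℕ} (ω : CoinFlips n) : Fin n → Fin n → Prop :=
  fun i j => (∃ h : i < j, ω ⟨(i, j), h⟩ = true) ∨ ∃ h : j < i, ω ⟨(j, i), h⟩ = false

lemma card_fix_false {ι : Type*} [Fintype ι] [DecidableEq ι] (A : Finset ι) :
    (univ.filter (fun f : ι → Bool => ∀ a ∈ A, f a = false)).card
      = 2 ^ (Fintype.card ι - A.card) := by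
  have e : {f : ι → Bool // ∀ a ∈ A, f a = false} ≃ ({i // i ∈ Aᶜ} → Bool) :=
    { toFun := fun f i => f.1 i.1
      invFun := fun g => ⟨fun i => if h : i ∈ A then false else g ⟨i, by simpa using h⟩,
        fun a ha => by simp [ha]⟩
      left_inv := by
        rintro ⟨f, hf⟩
        ext i
        by_cases h : i ∈ A <;> simp [h, hf _]
      right_inv := by
        rintro g
        ext ⟨i, hi⟩
        have h : i ∉ A := by simpa using hi
        simp [h] }
  have := Fintype.card_congr e
  rw [Fintype.card_subtype] at this
  rw [this]
  simp [Finset.card_compl]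

lemma card_lt_pairs {α : Type*} [LinearOrder α] [DecidableEq α] (S : Finset α) :
    ((S ×ˢ S).filter (fun p => p.1 < p.2)).card = S.card.choose 2 := by
  rw [← Sym2.card_image_offDiag S]
  apply Finset.card_bij (fun (p : α × α) _ => Function.uncurry Sym2.mk p)
  · rintro ⟨a, b⟩ hp
    simp only [mem_filter, mem_product] at hp
    exact Finset.mem_image.2 ⟨(a, b), by simp [Finset.mem_offDiag, hp.1.1, hp.1.2, hp.2.ne], rfl⟩
  · rintro ⟨a, b⟩ ha ⟨c, d⟩ hc h
    simp only [mem_filter, mem_product] at ha hc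
    change Sym2.mk a b = Sym2.mk c d at h
    rw [Sym2.eq_iff] at h
    rcases h with ⟨rfl, rfl⟩ | ⟨rfl, rfl⟩
    · rfl
    · exact absurd (ha.2.trans hc.2) (lt_irrefl _)
  · intro z hz
    obtain ⟨⟨a, b⟩, hab, rfl⟩ := Finset.mem_image.1 hz
    rw [Finset.mem_offDiag] at hab
    rcases lt_or_gt_of_ne hab.2.2 with h | h
    · exact ⟨(a, b), by simp [mem_filter, mem_product, hab.1, hab.2.1, h], rfl⟩
    · exact ⟨(b, a), by simp [mem_filter, mem_product, hab.1, hab.2.1, h], Sym2.eq_swap⟩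

lemma card_pairs_fin (n : ℕ) :
    Fintype.card {p : Fin n × Fin n // p.1 < p.2} = n.choose 2 := by
  classical
  rw [Fintype.card_subtype]
  have : (univ : Finset (Fin n × Fin n)).filter (fun p => p.1 < p.2)
      = ((univ : Finset (Fin n)) ×ˢ univ).filter (fun p => p.1 < p.2) := by
    rw [Finset.univ_product_univ]
  rw [this, card_lt_pairs, Finset.card_univ, Fintype.card_fin]

lemma coinflips_card (n : ℕ) : Nat.card (CoinFlips n) = 2 ^ n.choose 2 := by
  rw [Nat.card_fun, Nat.card_eq_fintype_card, Nat.card_eq_fintype_card, card_pairs_fin,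
    Fintype.card_bool]

lemma core {n k t : ℕ} (ω : CoinFlips n)
    (hk : ∀ S : Finset (Fin n), S.card = k →
      ∃ p : {p : Fin n × Fin n // p.1 < p.2}, p.1.1 ∈ S ∧ p.1.2 ∈ S ∧ ω p = true)
    (htk : (t - 1) * (k - 1) < n) :
    ∃ E' : Fin n → Fin n → Prop,
      (∀ u v, E' u v → tournOf ω u v) ∧ IsAcyclicRel E' ∧
      (t : ℕ∞) ≤ (SimpleGraph.fromRel E').chromaticNumber := by
  classical
  refine ⟨fun u v => ∃ h : u < v, ω ⟨(u, v), h⟩ = true, fun u v h => Or.inl h, ?_, ?_⟩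
  · intro v hv
    have mono : ∀ a b : Fin n,
        Relation.TransGen (fun u v => ∃ h : u < v, ω ⟨(u, v), h⟩ = true) a b → a < b := by
      intro a b h
      induction h with
      | single h => exact h.1
      | tail _ h ih => exact ih.trans h.1
    exact absurd (mono v v hv) (lt_irrefl v)
  · set G := SimpleGraph.fromRel (fun u v : Fin n => ∃ h : u < v, ω ⟨(u, v), h⟩ = true) with hG
    by_contra hlt
    push_neg at hlt
    have hne : G.chromaticNumber ≠ ⊤ := (hlt.trans (WithTop.coe_lt_top t)).ne
    have hcol := SimpleGraph.colorable_of_chromaticNumber_ne_top hne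
    set m := ENat.toNat G.chromaticNumber with hm
    have hmt : m < t := by
      have : (m : ℕ∞) = G.chromaticNumber := ENat.coe_toNat hne
      rw [← Nat.cast_lt (α := ℕ∞)]
      rw [this]; exact hlt
    obtain ⟨C⟩ := hcol
    have fib : ∀ i : Fin m, (univ.filter (fun v => C v = i)).card ≤ k - 1 := by
      intro i
      by_contra hbig
      push_neg at hbig
      have : k ≤ (univ.filter (fun v => C v = i)).card := by omega
      obtain ⟨S, hS, hSc⟩ := Finset.exists_subset_card_eq this
      obtain ⟨p, hp1, hp2, hp3⟩ := hk S hSc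
      have hadj : G.Adj p.1.1 p.1.2 := by
        rw [hG, SimpleGraph.fromRel_adj]
        refine ⟨p.2.ne, Or.inl ⟨p.2, ?_⟩⟩
        convert hp3
      have := C.valid hadj
      apply this
      have h1 := (Finset.mem_filter.1 (hS hp1)).2
      have h2 := (Finset.mem_filter.1 (hS hp2)).2
      rw [h1, h2]
    have hcard : (n : ℕ) ≤ m * (k - 1) := by
      have : (univ : Finset (Fin n)).card = ∑ i : Fin m, (univ.filter (fun v => C v = i)).card :=
        Finset.card_eq_sum_card_fiberwise (fun x _ => Finset.mem_univ (C x))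
      calc (n : ℕ) = (univ : Finset (Fin n)).card := by simp
        _ = ∑ i : Fin m, (univ.filter (fun v => C v = i)).card := this
        _ ≤ ∑ _i : Fin m, (k - 1) := Finset.sum_le_sum (fun i _ => fib i)
        _ = m * (k - 1) := by simp [Finset.sum_const, Finset.card_univ, mul_comm]
    have : m * (k - 1) ≤ (t - 1) * (k - 1) := Nat.mul_le_mul_right _ (by omega)
    omega

lemma bad_count (n k : ℕ) :
    Nat.card {ω : CoinFlips n // ∃ S : Finset (Fin n), S.card = k ∧
        ∀ p : {p : Fin n × Fin n // p.1 < p.2}, p.1.1 ∈ S → p.1.2 ∈ S → ω p = false}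
      ≤ n.choose k * 2 ^ (Fintype.card {p : Fin n × Fin n // p.1 < p.2} - k.choose 2) := by
  classical
  rw [Nat.card_eq_fintype_card, Fintype.card_subtype]
  have hsub : (univ.filter (fun ω : CoinFlips n => ∃ S : Finset (Fin n), S.card = k ∧
        ∀ p : {p : Fin n × Fin n // p.1 < p.2}, p.1.1 ∈ S → p.1.2 ∈ S → ω p = false))
      ⊆ (univ.powersetCard k).biUnion (fun S =>
        univ.filter (fun ω : CoinFlips n =>
          ∀ a ∈ univ.filter (fun p : {p : Fin n × Fin n // p.1 < p.2} =>
            p.1.1 ∈ S ∧ p.1.2 ∈ S), ω a = false)) := by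
    intro ω hω
    simp only [mem_filter, mem_univ, true_and] at hω
    obtain ⟨S, hSk, hS⟩ := hω
    refine Finset.mem_biUnion.2 ⟨S, ?_, ?_⟩
    · simp [Finset.mem_powersetCard, hSk]
    · simp only [mem_filter, mem_univ, true_and]
      exact fun a ha => hS a ha.1 ha.2
  refine (Finset.card_le_card hsub).trans ((Finset.card_biUnion_le).trans ?_)
  have key : ∀ S ∈ univ.powersetCard k,
      (univ.filter (fun ω : CoinFlips n =>
        ∀ a ∈ univ.filter (fun p : {p : Fin n × Fin n // p.1 < p.2} =>
          p.1.1 ∈ S ∧ p.1.2 ∈ S), ω a = false)).card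
      = 2 ^ (Fintype.card {p : Fin n × Fin n // p.1 < p.2} - k.choose 2) := by
    intro S hS
    rw [card_fix_false]
    congr 2
    have hSk : S.card = k := (Finset.mem_powersetCard.1 hS).2
    have : (univ.filter (fun p : {p : Fin n × Fin n // p.1 < p.2} =>
        p.1.1 ∈ S ∧ p.1.2 ∈ S)).card = ((S ×ˢ S).filter (fun p => p.1 < p.2)).card := by
      apply Finset.card_bij (fun (p : {p : Fin n × Fin n // p.1 < p.2}) _ => p.1)
      · rintro ⟨⟨a, b⟩, hab⟩ hp
        simp only [mem_filter, mem_univ, true_and] at hp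
        simp [mem_filter, mem_product, hp.1, hp.2, hab]
      · rintro ⟨p, hp⟩ _ ⟨q, hq⟩ _ h
        exact Subtype.ext h
      · rintro ⟨a, b⟩ hq
        simp only [mem_filter, mem_product] at hq
        exact ⟨⟨(a, b), hq.2⟩, by simp [hq.1.1, hq.1.2], rfl⟩
    rw [this, card_lt_pairs, hSk]
  rw [Finset.sum_congr rfl key, Finset.sum_const, Finset.card_powersetCard, Finset.card_univ,
    Fintype.card_fin, smul_eq_mul]

lemma exp_bound (L x η c' : ℝ) (hc'pos : 0 < c') (hηpos : 0 < η)
    (hinv : 1/(2*c') = 1 + η) (hx1 : 1 ≤ x) (hxge : L / c' - 1 ≤ x)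
    (hηL : 2 ≤ η * L) (hL0 : 0 < L) :
    L * x - x * (x - 1) / 2 ≤ L * (-(η/2)) := by
  have hx0 : (0:ℝ) ≤ x := by linarith
  have h4 : L / (2 * c') = (1 + η) * L := by
    rw [← hinv]; field_simp
  have hstep1 : (1 + η) * L - 1 ≤ (x - 1)/2 := by
    have h5 : L / c' - 2 ≤ x - 1 := by linarith
    have h8 : L / c' / 2 = L / (2 * c') := by rw [div_div, mul_comm]
    linarith [h5, h4, h8]
  have hstep2 : x * ((1 + η) * L - 1) ≤ x * ((x - 1)/2) :=
    mul_le_mul_of_nonneg_left hstep1 hx0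
  have hstep4 : x * (1 - η * L) ≤ 1 * (-(η * L / 2)) := by
    have h5 : 1 - η * L ≤ -(η * L / 2) := by linarith
    have h6 : x * (1 - η * L) ≤ x * (-(η * L / 2)) :=
      mul_le_mul_of_nonneg_left h5 hx0
    have h7 : x * (-(η * L / 2)) ≤ 1 * (-(η * L / 2)) := by
      apply mul_le_mul_of_nonpos_right hx1
      nlinarith
    linarith
  nlinarith [hstep2, hstep4]

lemma anal_bound (n K : ℕ) (η c' : ℝ) (hc'pos : 0 < c') (hηpos : 0 < η)
    (hinv : 1/(2*c') = 1 + η) (hn1R : (1:ℝ) < n)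
    (hK1R : (1:ℝ) ≤ K) (hKge : Real.logb 2 n / c' - 1 ≤ (K:ℝ))
    (hηL : 2 ≤ η * Real.logb 2 n) :
    (n:ℝ)^K / 2 ^ K.choose 2 ≤ (n:ℝ) ^ (-(η/2)) := by
  set L : ℝ := Real.logb 2 n with hLdef
  have hn0R : (0:ℝ) < n := by linarith
  have hL0 : 0 < L := Real.logb_pos (by norm_num) hn1R
  have hexp : L * K - (K.choose 2 : ℝ) ≤ L * (-(η/2)) := by
    have hC2 : ((K.choose 2 : ℕ) : ℝ) = (K:ℝ) * ((K:ℝ) - 1) / 2 :=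
      Nat.cast_choose_two ℝ K
    rw [hC2]
    exact exp_bound L (K:ℝ) η c' hc'pos hηpos hinv hK1R hKge hηL hL0
  have hn2L : (n:ℝ) = (2:ℝ) ^ L := by
    rw [hLdef]
    exact (Real.rpow_logb (by norm_num) (by norm_num) hn0R).symm
  have hlhs : (n:ℝ)^K / 2 ^ K.choose 2 = (2:ℝ) ^ (L * K - (K.choose 2 : ℝ)) := by
    rw [Real.rpow_sub (by norm_num)]
    congr 1
    · rw [hn2L, ← Real.rpow_natCast ((2:ℝ) ^ L) K, ← Real.rpow_mul (by norm_num)]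
    · rw [← Real.rpow_natCast 2 (K.choose 2)]
  have hrhs : (n:ℝ) ^ (-(η/2)) = (2:ℝ) ^ (L * (-(η/2))) := by
    rw [hn2L, ← Real.rpow_mul (by norm_num)]
  rw [hlhs, hrhs]
  exact Real.rpow_le_rpow_of_exponent_le (by norm_num) hexp
set_option maxHeartbeats 1000000 in
/-- The per-`n` lower bound on the fraction of good outcomes. -/
lemma per_n_bound (c c₀ c' η : ℝ) (hcle : c ≤ c₀) (hc₀pos : 0 < c₀) (hcc' : c₀ < c')
    (hc'pos : 0 < c') (hηpos : 0 < η) (hinv : 1/(2*c') = 1 + η) (n : ℕ)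
    (hn2 : 2 ≤ n)
    (hL1 : 1 ≤ Real.logb 2 n) (hLc' : c' ≤ Real.logb 2 n)
    (hL2η : 2/η ≤ Real.logb 2 n) (hnK : Real.logb 2 n / c' ≤ n) :
    1 - (n:ℝ) ^ (-(η/2)) ≤
      (Nat.card {ω : CoinFlips n //
            ∃ E' : Fin n → Fin n → Prop,
              (∀ u v, E' u v → tournOf ω u v) ∧ IsAcyclicRel E' ∧
              (⌈c * n / Real.logb 2 n⌉₊ : ℕ∞) ≤
                (SimpleGraph.fromRel E').chromaticNumber} : ℝ) /
          (Nat.card (CoinFlips n) : ℝ) := by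
  classical
  set L : ℝ := Real.logb 2 n with hLdef
  have hn1R : (1:ℝ) < n := by exact_mod_cast hn2
  have hn0R : (0:ℝ) < n := by linarith
  have hLpos : 0 < L := Real.logb_pos (by norm_num) hn1R
  set K : ℕ := ⌊L / c'⌋₊ with hKdef
  set T : ℕ := ⌈c₀ * n / L⌉₊ with hTdef
  have hKle : (K:ℝ) ≤ L / c' := Nat.floor_le (by positivity)
  have hKge : L / c' - 1 ≤ (K:ℝ) := (Nat.sub_one_lt_floor _).le
  have hK1 : 1 ≤ K := by
    apply Nat.le_floor
    rw [Nat.cast_one, le_div_iff₀ hc'pos]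
    linarith
  have hK1R : (1:ℝ) ≤ K := by exact_mod_cast hK1
  have hKn : K ≤ n := by
    have : (⌊L / c'⌋₊ : ℕ) ≤ ⌊(n:ℝ)⌋₊ := Nat.floor_le_floor hnK
    rwa [Nat.floor_natCast] at this
  have hCN : K.choose 2 ≤ n.choose 2 := Nat.choose_le_choose 2 hKn
  -- condition (A)
  have hA : (T - 1) * (K - 1) < n := by
    have ht1 : ((T - 1 : ℕ) : ℝ) ≤ c₀ * n / L := by
      rcases Nat.eq_zero_or_pos T with h | h
      · rw [h]
        have h0 : ((0 - 1 : ℕ) : ℝ) = 0 := by norm_num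
        rw [h0]
        positivity
      · have : (T : ℝ) < c₀ * n / L + 1 := Nat.ceil_lt_add_one (by positivity)
        rw [Nat.cast_sub h, Nat.cast_one]
        linarith
    have hk1 : ((K - 1 : ℕ) : ℝ) ≤ L / c' := by
      calc ((K - 1 : ℕ) : ℝ) ≤ (K : ℝ) := by exact_mod_cast Nat.sub_le K 1
        _ ≤ L / c' := hKle
    have hprod : ((T - 1 : ℕ) : ℝ) * ((K - 1 : ℕ) : ℝ) < n := by
      have h1 : ((T - 1 : ℕ) : ℝ) * ((K - 1 : ℕ) : ℝ) ≤ (c₀ * n / L) * (L / c') := by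
        apply mul_le_mul ht1 hk1 (by positivity) (by positivity)
      have h2 : (c₀ * n / L) * (L / c') = (c₀ / c') * n := by
        field_simp
      have h3 : (c₀ / c') * n < 1 * n := by
        apply mul_lt_mul_of_pos_right _ hn0R
        rw [div_lt_one hc'pos]
        exact hcc'
      rw [h2] at h1
      linarith
    have := hprod
    rw [← Nat.cast_mul] at this
    exact_mod_cast this
  -- from not-bad to good
  have hforall : ∀ ω : CoinFlips n,
      ¬ (∃ S : Finset (Fin n), S.card = K ∧
          ∀ p : {p : Fin n × Fin n // p.1 < p.2}, p.1.1 ∈ S → p.1.2 ∈ S → ω p = false) →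
      (∃ E' : Fin n → Fin n → Prop,
            (∀ u v, E' u v → tournOf ω u v) ∧ IsAcyclicRel E' ∧
            (⌈c * n / Real.logb 2 n⌉₊ : ℕ∞) ≤
              (SimpleGraph.fromRel E').chromaticNumber) := by
    intro ω hb
    push_neg at hb
    have hk : ∀ S : Finset (Fin n), S.card = K →
        ∃ p : {p : Fin n × Fin n // p.1 < p.2}, p.1.1 ∈ S ∧ p.1.2 ∈ S ∧ ω p = true := by
      intro S hS
      obtain ⟨p, hp1, hp2, hp3⟩ := hb S hS
      exact ⟨p, hp1, hp2, by simpa using hp3⟩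
    obtain ⟨E', hsub, hacyc, hchr⟩ := core (t := T) ω hk hA
    refine ⟨E', hsub, hacyc, le_trans ?_ hchr⟩
    rw [Nat.cast_le]
    apply Nat.ceil_le_ceil
    rw [div_eq_mul_inv, div_eq_mul_inv]
    exact mul_le_mul_of_nonneg_right
      (mul_le_mul_of_nonneg_right hcle (by positivity)) (by positivity)
  -- counting
  set BadP : CoinFlips n → Prop := fun ω => ∃ S : Finset (Fin n), S.card = K ∧
      ∀ p : {p : Fin n × Fin n // p.1 < p.2}, p.1.1 ∈ S → p.1.2 ∈ S → ω p = false with hBadP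
  set GoodP : CoinFlips n → Prop := fun ω => ∃ E' : Fin n → Fin n → Prop,
            (∀ u v, E' u v → tournOf ω u v) ∧ IsAcyclicRel E' ∧
            (⌈c * n / Real.logb 2 n⌉₊ : ℕ∞) ≤
              (SimpleGraph.fromRel E').chromaticNumber with hGoodP
  have hmono : Fintype.card {ω // ¬ BadP ω} ≤ Fintype.card {ω // GoodP ω} :=
    Fintype.card_subtype_mono _ _ hforall
  have hcompl : Fintype.card {ω // ¬ BadP ω}
      = 2 ^ n.choose 2 - Fintype.card {ω // BadP ω} := by
    have htotF : Fintype.card (CoinFlips n) = 2 ^ n.choose 2 := by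
      have := coinflips_card n
      rwa [Nat.card_eq_fintype_card] at this
    rw [Fintype.card_subtype_compl, htotF]
  have hbadle : Fintype.card {ω // BadP ω} ≤ n.choose K * 2 ^ (n.choose 2 - K.choose 2) := by
    have h := bad_count n K
    rw [Nat.card_eq_fintype_card, card_pairs_fin] at h
    exact h
  have hbadtot : Fintype.card {ω // BadP ω} ≤ 2 ^ n.choose 2 := by
    have := Fintype.card_subtype_le BadP
    have htot : Fintype.card (CoinFlips n) = 2 ^ n.choose 2 := by
      have := coinflips_card n
      rwa [Nat.card_eq_fintype_card] at this
    omega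
  -- to reals
  have hgood : (2:ℝ) ^ n.choose 2 - (Fintype.card {ω // BadP ω} : ℝ)
      ≤ (Fintype.card {ω // GoodP ω} : ℝ) := by
    have h1 : ((2 ^ n.choose 2 - Fintype.card {ω // BadP ω} : ℕ) : ℝ)
        = (2:ℝ) ^ n.choose 2 - (Fintype.card {ω // BadP ω} : ℝ) := by
      rw [Nat.cast_sub hbadtot]
      push_cast
      ring
    rw [← h1, ← hcompl]
    exact_mod_cast hmono
  -- bad bound to reals
  have hbadR : (Fintype.card {ω // BadP ω} : ℝ)
      ≤ (n:ℝ)^K / 2 ^ K.choose 2 * 2 ^ n.choose 2 := by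
    have h1 : (Fintype.card {ω // BadP ω} : ℝ)
        ≤ (n.choose K : ℝ) * 2 ^ (n.choose 2 - K.choose 2) := by exact_mod_cast hbadle
    have h2 : ((2:ℝ)) ^ (n.choose 2 - K.choose 2)
        = 2 ^ n.choose 2 * (2 ^ K.choose 2)⁻¹ :=
      pow_sub₀ (2:ℝ) (by norm_num) hCN
    have h3 : (n.choose K : ℝ) ≤ (n:ℝ)^K := by
      calc (n.choose K : ℝ) ≤ ((n:ℝ) ^ K : ℝ) / (K.factorial : ℝ) :=
            Nat.choose_le_pow_div K n
        _ ≤ (n:ℝ)^K := by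
          apply div_le_self (by positivity)
          exact_mod_cast Nat.one_le_iff_ne_zero.2 (Nat.factorial_ne_zero K)
    calc (Fintype.card {ω // BadP ω} : ℝ)
        ≤ (n.choose K : ℝ) * 2 ^ (n.choose 2 - K.choose 2) := h1
      _ = (n.choose K : ℝ) / 2 ^ K.choose 2 * 2 ^ n.choose 2 := by
          rw [h2]; ring
      _ ≤ (n:ℝ)^K / 2 ^ K.choose 2 * 2 ^ n.choose 2 := by
          apply mul_le_mul_of_nonneg_right _ (by positivity)
          exact (div_le_div_iff_of_pos_right (by positivity)).mpr h3
  have hηL : 2 ≤ η * L := by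
    rw [div_le_iff₀ hηpos] at hL2η
    linarith [hL2η]
  have hanal : (n:ℝ)^K / 2 ^ K.choose 2 ≤ (n:ℝ) ^ (-(η/2)) :=
    anal_bound n K η c' hc'pos hηpos hinv hn1R hK1R hKge hηL
  -- final assembly
  have htot : (Nat.card (CoinFlips n) : ℝ) = 2 ^ n.choose 2 := by
    rw [coinflips_card]; push_cast; ring
  have hgoodcast : (Nat.card {ω : CoinFlips n // GoodP ω} : ℝ)
      = (Fintype.card {ω // GoodP ω} : ℝ) := by rw [Nat.card_eq_fintype_card]
  have h2N : (0:ℝ) < 2 ^ n.choose 2 := by positivity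
  have hchain : (1 - (n:ℝ) ^ (-(η/2))) * (2 ^ n.choose 2)
      ≤ (Fintype.card {ω // GoodP ω} : ℝ) := by
    have hbb : (Fintype.card {ω // BadP ω} : ℝ) ≤ (n:ℝ) ^ (-(η/2)) * 2 ^ n.choose 2 := by
      calc (Fintype.card {ω // BadP ω} : ℝ)
          ≤ (n:ℝ)^K / 2 ^ K.choose 2 * 2 ^ n.choose 2 := hbadR
        _ ≤ (n:ℝ) ^ (-(η/2)) * 2 ^ n.choose 2 :=
            mul_le_mul_of_nonneg_right hanal (by positivity)
    rw [one_sub_mul]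
    linarith [hgood, hbb]
  calc 1 - (n:ℝ) ^ (-(η/2))
      = (1 - (n:ℝ) ^ (-(η/2))) * (2 ^ n.choose 2) / (2 ^ n.choose 2) := by
        field_simp
    _ ≤ (Fintype.card {ω // GoodP ω} : ℝ) / (2 ^ n.choose 2) :=
        (div_le_div_iff_of_pos_right h2N).mpr hchain
    _ = (Nat.card {ω : CoinFlips n // GoodP ω} : ℝ) / (Nat.card (CoinFlips n) : ℝ) := by
        rw [htot, hgoodcast]
    _ = _ := rfl


set_option maxHeartbeats 1000000 in
theorem stmt13 (c : ℝ) (hc : c < 1 / 2) :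
    Filter.Tendsto
      (fun n : ℕ =>
        (Nat.card {ω : CoinFlips n //
            ∃ E' : Fin n → Fin n → Prop,
              (∀ u v, E' u v → tournOf ω u v) ∧ IsAcyclicRel E' ∧
              (⌈c * n / Real.logb 2 n⌉₊ : ℕ∞) ≤
                (SimpleGraph.fromRel E').chromaticNumber} : ℝ) /
          (Nat.card (CoinFlips n) : ℝ))
      Filter.atTop (nhds 1) := by
  classical
  set c₀ : ℝ := max c (1/4) with hc₀def
  have hc₀lt : c₀ < 1/2 := max_lt hc (by norm_num)
  have hc₀pos : (0:ℝ) < c₀ := lt_of_lt_of_le (by norm_num) (le_max_right _ _)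
  have hcle : c ≤ c₀ := le_max_left _ _
  set c' : ℝ := (c₀ + 1/2)/2 with hc'def
  have hc'pos : 0 < c' := by rw [hc'def]; linarith
  have hcc' : c₀ < c' := by rw [hc'def]; linarith
  have hc'lt : c' < 1/2 := by rw [hc'def]; linarith
  set η : ℝ := 1/(2*c') - 1 with hηdef
  have hinv : 1/(2*c') = 1 + η := by rw [hηdef]; ring
  have hηpos : 0 < η := by
    rw [hηdef]
    have h1 : (0:ℝ) < 2*c' := by linarith
    have h2 : 2*c' < 1 := by linarith
    have := one_lt_one_div h1 h2
    linarith
  have htotpos : ∀ n : ℕ, (0:ℝ) < (Nat.card (CoinFlips n) : ℝ) := by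
    intro n
    rw [coinflips_card]
    positivity
  have hub : ∀ n : ℕ, (Nat.card {ω : CoinFlips n //
            ∃ E' : Fin n → Fin n → Prop,
              (∀ u v, E' u v → tournOf ω u v) ∧ IsAcyclicRel E' ∧
              (⌈c * n / Real.logb 2 n⌉₊ : ℕ∞) ≤
                (SimpleGraph.fromRel E').chromaticNumber} : ℝ) /
          (Nat.card (CoinFlips n) : ℝ) ≤ 1 := by
    intro n
    rw [div_le_one (htotpos n)]
    rw [Nat.card_eq_fintype_card, Nat.card_eq_fintype_card]
    exact_mod_cast Fintype.card_subtype_le _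
  have hL : Filter.Tendsto (fun n : ℕ => Real.logb 2 n) Filter.atTop Filter.atTop :=
    (Real.tendsto_logb_atTop (by norm_num : (1:ℝ) < 2)).comp tendsto_natCast_atTop_atTop
  have E1 : ∀ᶠ n : ℕ in Filter.atTop, 2 ≤ n := Filter.eventually_ge_atTop 2
  have E2 : ∀ᶠ n : ℕ in Filter.atTop, max (max (2/η) c') 1 ≤ Real.logb 2 n :=
    hL.eventually_ge_atTop _
  have E3 : ∀ᶠ n : ℕ in Filter.atTop, Real.logb 2 n / c' ≤ n := by
    have hδ : (0:ℝ) < c' * Real.log 2 := by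
      have := Real.log_pos (by norm_num : (1:ℝ) < 2)
      positivity
    have h := Real.isLittleO_log_id_atTop.def hδ
    have h2 := (tendsto_natCast_atTop_atTop (R := ℝ)).eventually h
    filter_upwards [h2, Filter.eventually_ge_atTop 1] with n hn hn1
    have hn0 : (0:ℝ) ≤ (n:ℝ) := by positivity
    have hn1' : (1:ℝ) ≤ (n:ℝ) := by exact_mod_cast hn1
    have hlog0 : 0 ≤ Real.log n := Real.log_nonneg hn1'
    rw [Real.norm_eq_abs, Real.norm_eq_abs, abs_of_nonneg hlog0, id_eq, abs_of_nonneg hn0] at hn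
    rw [Real.logb, div_div, div_le_iff₀ (by positivity)]
    calc Real.log n ≤ c' * Real.log 2 * n := hn
      _ = n * (Real.log 2 * c') := by ring
  have hmain : ∀ᶠ n : ℕ in Filter.atTop, 1 - (n:ℝ) ^ (-(η/2)) ≤
      (Nat.card {ω : CoinFlips n //
            ∃ E' : Fin n → Fin n → Prop,
              (∀ u v, E' u v → tournOf ω u v) ∧ IsAcyclicRel E' ∧
              (⌈c * n / Real.logb 2 n⌉₊ : ℕ∞) ≤
                (SimpleGraph.fromRel E').chromaticNumber} : ℝ) /
          (Nat.card (CoinFlips n) : ℝ) := by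
    filter_upwards [E1, E2, E3] with n hn2 hnL hnK
    exact per_n_bound c c₀ c' η hcle hc₀pos hcc' hc'pos hηpos hinv n hn2
      (le_trans (le_max_right _ _) hnL)
      (le_trans ((le_max_right _ _).trans (le_max_left _ _)) hnL)
      (le_trans ((le_max_left _ _).trans (le_max_left _ _)) hnL) hnK
  have hlow : Filter.Tendsto (fun n : ℕ => 1 - (n:ℝ) ^ (-(η/2))) Filter.atTop (nhds 1) := by
    have h0 : Filter.Tendsto (fun n : ℕ => (n:ℝ) ^ (-(η/2))) Filter.atTop (nhds 0) :=
      (tendsto_rpow_neg_atTop (by positivity)).comp tendsto_natCast_atTop_atTop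
    have := (tendsto_const_nhds (x := (1:ℝ)) (f := Filter.atTop (α := ℕ))).sub h0
    simpa using this
  exact tendsto_of_tendsto_of_tendsto_of_le_of_le' hlow tendsto_const_nhds hmain
    (Filter.Eventually.of_forall hub)
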